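/- Let T₀ > 0, 0 < μ₁ < μ₂, ω a modulus of continuity, θ : (0,T₀) → (0,∞) continuous and nonincreasing, and let c* ∈ D(T₀,μ₁,μ₂,ω,θ;T₁,γ,η) for admissible parameters T₁, γ, η. Set ν₁ := min{1, √μ₁/π}. Let λ > 0 satisfy ν₁·ω(1/λ) ≤ 8γ³ and (ν₁/(2γ))·ω(1/λ) ≤ min{γ² − μ₁, μ₂ − γ²}. Let 0 < a < b < T₁ be such that a·γ·λ/(2π) and b·γ·λ/(2π) are natural numbers, ω(b) ≤ η·ω(T₁ − b), and ν₁·λ·ω(1/λ) ≤ θ(b). Set ε := ν₁·λ·ω(1/λ) and define c_λ(t) := c*(t) for t ∈ [0,a] ∪ [b,T₀] and c_λ(t) := γ² − φ_{ε,γ,λ}(t) for t ∈ [a,b]. Then c_λ belongs to PS(T₀,μ₁,μ₂,ω,θ) and |c_λ(t) − c*(t)| ≤ (ν₁/(2γ))·ω(1/λ) for every t ∈ [0,T₀]. -/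

import Mathlib

open Set Filter MeasureTheory

/-- A modulus of continuity: positive for positive arguments, tends to `0` at `0⁺`,
nondecreasing, and `σ ↦ σ / ω σ` is nondecreasing on `(0, ∞)`. -/
def IsModulusOfContinuity (ω : ℝ → ℝ) : Prop :=
  (∀ σ : ℝ, 0 < σ → 0 < ω σ) ∧
  Tendsto ω (nhdsWithin 0 (Ioi 0)) (nhds 0) ∧
  (∀ s t : ℝ, 0 ≤ s → s ≤ t → ω s ≤ ω t) ∧
  (∀ s t : ℝ, 0 < s → s ≤ t → s / ω s ≤ t / ω t)

/-- Membership in the class `PS(T₀, μ₁, μ₂, ω, θ)` of propagation speeds. -/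
def MemPS (T0 μ1 μ2 : ℝ) (ω θ : ℝ → ℝ) (c : ℝ → ℝ) : Prop :=
  ContinuousOn c (Icc 0 T0) ∧
  LocallyLipschitzOn (Ioo 0 T0) c ∧
  (∀ t ∈ Ioo 0 T0, μ1 ≤ c t ∧ c t ≤ μ2) ∧
  (∀ t ∈ Icc 0 T0, ∀ s ∈ Icc 0 T0, |c t - c s| ≤ ω |t - s|) ∧
  (∀ᵐ t ∂(volume.restrict (Ioo 0 T0)), |deriv c t| ≤ θ t)

/-- The key quantity `m(λ) = inf { λ ω(1/λ) s + ∫_s^{T₀} θ : s ∈ (0, T₀] }`. -/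
noncomputable def mFun (T0 : ℝ) (ω θ : ℝ → ℝ) (lam : ℝ) : ℝ :=
  sInf ((fun s => lam * ω (1 / lam) * s + ∫ t in s..T0, θ t) '' Ioc 0 T0)

/-- Derivative within the time interval `[0, T₀]`. -/
noncomputable def der (T0 : ℝ) (u : ℝ → ℝ) : ℝ → ℝ :=
  fun t => derivWithin u (Icc 0 T0) t

/-- `u` is a (twice differentiable) solution of `u'' + λ² c(t) u = 0` on `[0, T₀]`. -/
def IsSol (T0 lam : ℝ) (c u : ℝ → ℝ) : Prop :=
  ∀ t ∈ Icc 0 T0,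
    HasDerivWithinAt u (der T0 u t) (Icc 0 T0) t ∧
    HasDerivWithinAt (der T0 u) (-(lam ^ 2 * c t * u t)) (Icc 0 T0) t

/-- Membership in the class `D(T₀,μ₁,μ₂,ω,θ; T₁,γ,η)`. -/
def MemD (T0 μ1 μ2 : ℝ) (ω θ : ℝ → ℝ) (T1 γ η : ℝ) (c : ℝ → ℝ) : Prop :=
  MemPS T0 μ1 μ2 ω θ c ∧
  (∀ t ∈ Icc 0 T1, c t = γ ^ 2) ∧
  (∀ t ∈ Icc 0 T0, ∀ s ∈ Icc 0 T0, |c t - c s| ≤ (1 - η) * ω |t - s|)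

/-- The building-block perturbation
`φ_{ε,γ,λ}(t) = (ε/(4γλ)) sin(2γλt) + (ε²/(64γ⁴λ²)) sin⁴(γλt)`. -/
noncomputable def phiF (ε γ lam t : ℝ) : ℝ :=
  ε / (4 * γ * lam) * Real.sin (2 * γ * lam * t) +
    ε ^ 2 / (64 * γ ^ 4 * lam ^ 2) * (Real.sin (γ * lam * t)) ^ 4

/-- The constant `ν₁ = min{1, √μ₁/π}`. -/
noncomputable def nu1 (μ1 : ℝ) : ℝ := min 1 (Real.sqrt μ1 / Real.pi)

/-- The coefficient of the `ω`-construction: `c* ` outside `[a,b]`, and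
`γ² - φ_{ε,γ,λ}` on `[a,b]`. -/
noncomputable def omegaConstr (cstar : ℝ → ℝ) (ε γ lam a b : ℝ) : ℝ → ℝ :=
  fun t => if a ≤ t ∧ t ≤ b then γ ^ 2 - phiF ε γ lam t else cstar t

lemma phi_hasDerivAt (ε γ lam t : ℝ) (hγ : γ ≠ 0) (hlam : lam ≠ 0) :
    HasDerivAt (phiF ε γ lam)
      (ε / 2 * Real.cos (2 * γ * lam * t) +
        ε ^ 2 / (16 * γ ^ 3 * lam) * (Real.sin (γ * lam * t)) ^ 3 * Real.cos (γ * lam * t)) t := by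
  have hl1 : HasDerivAt (fun x : ℝ => 2 * γ * lam * x) (2 * γ * lam) t := by
    simpa using (hasDerivAt_id t).const_mul (2 * γ * lam)
  have hl2 : HasDerivAt (fun x : ℝ => γ * lam * x) (γ * lam) t := by
    simpa using (hasDerivAt_id t).const_mul (γ * lam)
  have h1 : HasDerivAt (fun x => Real.sin (2 * γ * lam * x))
      (Real.cos (2 * γ * lam * t) * (2 * γ * lam)) t :=
    (Real.hasDerivAt_sin _).comp t hl1
  have h2 : HasDerivAt (fun x => Real.sin (γ * lam * x))
      (Real.cos (γ * lam * t) * (γ * lam)) t :=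
    (Real.hasDerivAt_sin _).comp t hl2
  have h3 : HasDerivAt (fun x => (Real.sin (γ * lam * x)) ^ 4)
      ((4 : ℕ) * (Real.sin (γ * lam * t)) ^ (4 - 1) * (Real.cos (γ * lam * t) * (γ * lam))) t :=
    h2.pow 4
  have h := (h1.const_mul (ε / (4 * γ * lam))).add (h3.const_mul (ε ^ 2 / (64 * γ ^ 4 * lam ^ 2)))
  refine h.congr_deriv ?_
  field_simp
  ring

lemma phi_deriv_bound (ε γ lam t : ℝ) (hγ : 0 < γ) (hlam : 0 < lam)
    (hε : 0 ≤ ε) (hε8 : ε ≤ 8 * γ ^ 3 * lam) :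
    |ε / 2 * Real.cos (2 * γ * lam * t) +
      ε ^ 2 / (16 * γ ^ 3 * lam) * (Real.sin (γ * lam * t)) ^ 3 * Real.cos (γ * lam * t)| ≤ ε := by
  have hc1 : |Real.cos (2 * γ * lam * t)| ≤ 1 := Real.abs_cos_le_one _
  have hc2 : |Real.cos (γ * lam * t)| ≤ 1 := Real.abs_cos_le_one _
  have hs : |Real.sin (γ * lam * t)| ≤ 1 := Real.abs_sin_le_one _
  have hs3 : |(Real.sin (γ * lam * t)) ^ 3| ≤ 1 := by
    rw [abs_pow]; exact pow_le_one₀ (abs_nonneg _) hs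
  have hB : (0:ℝ) < 16 * γ ^ 3 * lam := by positivity
  have h2 : ε ^ 2 / (16 * γ ^ 3 * lam) ≤ ε / 2 := by
    rw [div_le_div_iff₀ hB (by norm_num)]
    nlinarith
  calc |ε / 2 * Real.cos (2 * γ * lam * t) +
      ε ^ 2 / (16 * γ ^ 3 * lam) * (Real.sin (γ * lam * t)) ^ 3 * Real.cos (γ * lam * t)|
      ≤ |ε / 2 * Real.cos (2 * γ * lam * t)| +
        |ε ^ 2 / (16 * γ ^ 3 * lam) * (Real.sin (γ * lam * t)) ^ 3 * Real.cos (γ * lam * t)| :=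
        abs_add_le _ _
    _ ≤ ε / 2 + ε / 2 := by
        rw [abs_mul, abs_mul, abs_mul,
          abs_of_nonneg (by positivity : (0:ℝ) ≤ ε / 2),
          abs_of_nonneg (by positivity : (0:ℝ) ≤ ε ^ 2 / (16 * γ ^ 3 * lam))]
        have e1 : ε / 2 * |Real.cos (2 * γ * lam * t)| ≤ ε / 2 * 1 :=
          mul_le_mul_of_nonneg_left hc1 (by positivity)
        have e2 : ε ^ 2 / (16 * γ ^ 3 * lam) * |Real.sin (γ * lam * t) ^ 3| *
            |Real.cos (γ * lam * t)| ≤ ε ^ 2 / (16 * γ ^ 3 * lam) * 1 * 1 := by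
          apply mul_le_mul (mul_le_mul_of_nonneg_left hs3 (by positivity)) hc2 (abs_nonneg _)
          positivity
        nlinarith
    _ = ε := by ring

lemma phi_lip (ε γ lam : ℝ) (hγ : 0 < γ) (hlam : 0 < lam)
    (hε : 0 ≤ ε) (hε8 : ε ≤ 8 * γ ^ 3 * lam) (t s : ℝ) :
    |phiF ε γ lam t - phiF ε γ lam s| ≤ ε * |t - s| := by
  have := Convex.norm_image_sub_le_of_norm_hasDerivWithin_le
    (f := phiF ε γ lam)
    (f' := fun x => ε / 2 * Real.cos (2 * γ * lam * x) +
      ε ^ 2 / (16 * γ ^ 3 * lam) * (Real.sin (γ * lam * x)) ^ 3 * Real.cos (γ * lam * x))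
    (s := univ) (C := ε)
    (fun x _ => (phi_hasDerivAt ε γ lam x hγ.ne' hlam.ne').hasDerivWithinAt)
    (fun x _ => by simpa [Real.norm_eq_abs] using phi_deriv_bound ε γ lam x hγ hlam hε hε8)
    convex_univ (mem_univ s) (mem_univ t)
  simpa [Real.norm_eq_abs] using this

lemma phi_bound (ε γ lam t : ℝ) (hγ : 0 < γ) (hlam : 0 < lam)
    (hε : 0 ≤ ε) (hε8 : ε ≤ 8 * γ ^ 3 * lam) :
    |phiF ε γ lam t| ≤ 3 * ε / (8 * γ * lam) := by
  have hc1 : |Real.sin (2 * γ * lam * t)| ≤ 1 := Real.abs_sin_le_one _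
  have hs : |Real.sin (γ * lam * t)| ≤ 1 := Real.abs_sin_le_one _
  have hs4 : |(Real.sin (γ * lam * t)) ^ 4| ≤ 1 := by
    rw [abs_pow]; exact pow_le_one₀ (abs_nonneg _) hs
  have hB : (0:ℝ) < 64 * γ ^ 4 * lam ^ 2 := by positivity
  have h2 : ε ^ 2 / (64 * γ ^ 4 * lam ^ 2) ≤ ε / (8 * γ * lam) := by
    rw [div_le_div_iff₀ hB (by positivity)]
    nlinarith [mul_le_mul_of_nonneg_left hε8 (mul_nonneg hε (by positivity : (0:ℝ) ≤ 8*γ*lam))]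
  calc |phiF ε γ lam t|
      ≤ |ε / (4 * γ * lam) * Real.sin (2 * γ * lam * t)| +
        |ε ^ 2 / (64 * γ ^ 4 * lam ^ 2) * (Real.sin (γ * lam * t)) ^ 4| := abs_add_le _ _
    _ ≤ ε / (4 * γ * lam) + ε / (8 * γ * lam) := by
        rw [abs_mul, abs_mul,
          abs_of_nonneg (by positivity : (0:ℝ) ≤ ε / (4 * γ * lam)),
          abs_of_nonneg (by positivity : (0:ℝ) ≤ ε ^ 2 / (64 * γ ^ 4 * lam ^ 2))]
        have e1 : ε / (4 * γ * lam) * |Real.sin (2 * γ * lam * t)| ≤ ε / (4 * γ * lam) * 1 :=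
          mul_le_mul_of_nonneg_left hc1 (by positivity)
        have e2 : ε ^ 2 / (64 * γ ^ 4 * lam ^ 2) * |Real.sin (γ * lam * t) ^ 4| ≤
            ε ^ 2 / (64 * γ ^ 4 * lam ^ 2) * 1 :=
          mul_le_mul_of_nonneg_left hs4 (by positivity)
        nlinarith
    _ = 3 * ε / (8 * γ * lam) := by field_simp; ring

lemma phi_vanish (ε γ lam t : ℝ) (n : ℕ) (h : γ * lam * t = 2 * Real.pi * n) :
    phiF ε γ lam t = 0 := by
  have h1 : Real.sin (γ * lam * t) = 0 := by
    rw [h]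
    have : (2 : ℝ) * Real.pi * n = (2 * n : ℕ) * Real.pi := by push_cast; ring
    rw [this, Real.sin_nat_mul_pi]
  have h2 : Real.sin (2 * γ * lam * t) = 0 := by
    have : (2 : ℝ) * γ * lam * t = (2 * (2 * n) : ℕ) * Real.pi := by
      push_cast; rw [mul_assoc 2 γ, mul_assoc 2 (γ*lam), h]; ring
    rw [this, Real.sin_nat_mul_pi]
  simp [phiF, h1, h2]

set_option maxHeartbeats 1000000 in
/-- `ω`-construction, Proposition `prop:omega`, statement (1). -/
theorem omega_construction_membership
    (T0 μ1 μ2 T1 γ η : ℝ) (ω θ : ℝ → ℝ)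
    (hT0 : 0 < T0) (hμ1 : 0 < μ1) (hμ12 : μ1 < μ2)
    (hω : IsModulusOfContinuity ω)
    (hθcont : ContinuousOn θ (Ioo 0 T0))
    (hθpos : ∀ t ∈ Ioo 0 T0, 0 < θ t)
    (hθmono : AntitoneOn θ (Ioo 0 T0))
    (hT1 : T1 ∈ Ioo 0 T0) (hγ : 0 < γ) (hγ2 : γ ^ 2 ∈ Ioo μ1 μ2) (hη : η ∈ Ioo 0 1)
    (cstar : ℝ → ℝ) (hcstar : MemD T0 μ1 μ2 ω θ T1 γ η cstar)
    (lam : ℝ) (hlam : 0 < lam)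
    (hlam1 : nu1 μ1 * ω (1 / lam) ≤ 8 * γ ^ 3)
    (hlam2 : nu1 μ1 / (2 * γ) * ω (1 / lam) ≤ min (γ ^ 2 - μ1) (μ2 - γ ^ 2))
    (a b : ℝ) (ha : 0 < a) (hab : a < b) (hb : b < T1)
    (haN : ∃ n : ℕ, a * γ * lam / (2 * Real.pi) = n)
    (hbN : ∃ n : ℕ, b * γ * lam / (2 * Real.pi) = n)
    (hωb : ω b ≤ η * ω (T1 - b))
    (hθb : nu1 μ1 * lam * ω (1 / lam) ≤ θ b) :
    MemPS T0 μ1 μ2 ω θ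
        (omegaConstr cstar (nu1 μ1 * lam * ω (1 / lam)) γ lam a b) ∧
    ∀ t ∈ Icc 0 T0,
      |omegaConstr cstar (nu1 μ1 * lam * ω (1 / lam)) γ lam a b t - cstar t| ≤
        nu1 μ1 / (2 * γ) * ω (1 / lam) := by
  obtain ⟨hωpos, hωtend, hωmono, hωdiv⟩ := hω
  obtain ⟨⟨hc_cont, hc_lip, hc_bd, hc_mod, hc_ae⟩, hc_eq, hc_mod'⟩ := hcstar
  have hπ : (0:ℝ) < Real.pi := Real.pi_pos
  have hπ3 : (3:ℝ) < Real.pi := Real.pi_gt_three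
  set ε := nu1 μ1 * lam * ω (1 / lam) with hεdef
  have hν1pos : 0 < nu1 μ1 := lt_min one_pos (div_pos (Real.sqrt_pos.mpr hμ1) hπ)
  have hν1le1 : nu1 μ1 ≤ 1 := min_le_left _ _
  have hsq : Real.sqrt μ1 ≤ γ := by
    have h := Real.sqrt_le_sqrt hγ2.1.le
    rwa [Real.sqrt_sq hγ.le] at h
  have hν1γ : nu1 μ1 * Real.pi ≤ γ := by
    calc nu1 μ1 * Real.pi ≤ Real.sqrt μ1 / Real.pi * Real.pi :=
          mul_le_mul_of_nonneg_right (min_le_right _ _) hπ.le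
      _ = Real.sqrt μ1 := div_mul_cancel₀ _ hπ.ne'
      _ ≤ γ := hsq
  have hω1pos : 0 < ω (1 / lam) := hωpos _ (by positivity)
  have hεpos : 0 < ε := by rw [hεdef]; positivity
  have hε8 : ε ≤ 8 * γ ^ 3 * lam := by
    rw [hεdef]
    nlinarith [hlam1, hlam, mul_pos hν1pos hω1pos]
  -- the vanishing of phi at a and b
  obtain ⟨na, hna⟩ := haN
  obtain ⟨nb, hnb⟩ := hbN
  have hpa : phiF ε γ lam a = 0 := by
    refine phi_vanish ε γ lam a na ?_
    field_simp at hna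
    linarith [hna]
  have hpb : phiF ε γ lam b = 0 := by
    refine phi_vanish ε γ lam b nb ?_
    field_simp at hnb
    linarith [hnb]
  -- the auxiliary function ψ
  set ψ : ℝ → ℝ := fun t => phiF ε γ lam (max a (min t b)) with hψdef
  have hψval : ∀ t, ψ t = phiF ε γ lam (max a (min t b)) := fun t => rfl
  have hψ0a : ∀ t, t ≤ a → ψ t = 0 := by
    intro t h
    rw [hψval, min_eq_left (h.trans hab.le), max_eq_left h, hpa]
  have hψ0b : ∀ t, b ≤ t → ψ t = 0 := by
    intro t h
    rw [hψval, min_eq_right h, max_eq_right hab.le, hpb]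
  have hψin : ∀ t, a ≤ t → t ≤ b → ψ t = phiF ε γ lam t := by
    intro t h1 h2
    rw [hψval, min_eq_left h2, max_eq_right h1]
  have hψlip : ∀ t s, |ψ t - ψ s| ≤ ε * |t - s| := by
    intro t s
    have h1 := phi_lip ε γ lam hγ hlam hεpos.le hε8 (max a (min t b)) (max a (min s b))
    have h2 : |max a (min t b) - max a (min s b)| ≤ |t - s| := by
      have h3 : |max a (min t b) - max a (min s b)| ≤ |min t b - min s b| := by
        rw [max_comm a (min t b), max_comm a (min s b)]
        exact abs_max_sub_max_le_abs _ _ _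
      have h4 : |min t b - min s b| ≤ max |t - s| |b - b| := abs_min_sub_min_le_max _ _ _ _
      simp only [sub_self, abs_zero] at h4
      have h5 : max |t - s| 0 = |t - s| := max_eq_left (abs_nonneg _)
      rw [h5] at h4
      exact h3.trans h4
    exact h1.trans (mul_le_mul_of_nonneg_left h2 hεpos.le)
  have hψbd : ∀ t, |ψ t| ≤ 3 * ε / (8 * γ * lam) := by
    intro t
    rw [hψval]
    exact phi_bound ε γ lam _ hγ hlam hεpos.le hε8
  have hMle : 3 * ε / (8 * γ * lam) ≤ nu1 μ1 / (2 * γ) * ω (1 / lam) := by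
    have he : nu1 μ1 / (2 * γ) * ω (1 / lam) = nu1 μ1 * ω (1 / lam) / (2 * γ) := by ring
    rw [hεdef, he, div_le_div_iff₀ (by positivity : (0:ℝ) < 8 * γ * lam)
      (by positivity : (0:ℝ) < 2 * γ)]
    nlinarith [mul_pos (mul_pos (mul_pos hν1pos hω1pos) hγ) hlam]
  have hψbd' : ∀ t, |ψ t| ≤ nu1 μ1 / (2 * γ) * ω (1 / lam) := fun t => (hψbd t).trans hMle
  -- the constructed coefficient written as a global difference
  have hcω : ∀ t ∈ Icc 0 T0, omegaConstr cstar ε γ lam a b t = cstar t - ψ t := by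
    intro t _
    by_cases h : a ≤ t ∧ t ≤ b
    · simp only [omegaConstr, if_pos h]
      rw [hc_eq t ⟨le_trans ha.le h.1, h.2.trans hb.le⟩, hψin t h.1 h.2]
    · simp only [omegaConstr, if_neg h]
      rcases not_and_or.mp h with h' | h'
      · rw [hψ0a t (not_le.mp h').le]; ring
      · rw [hψ0b t (not_le.mp h').le]; ring
  -- the key modulus estimate for ψ
  have hK : ∀ t s, t ≠ s → |ψ t - ψ s| ≤ ω |t - s| := by
    intro t s hts
    have hσpos : 0 < |t - s| := abs_pos.mpr (sub_ne_zero.mpr hts)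
    rcases le_or_gt |t - s| (1 / lam) with hcase | hcase
    · have h1 := hωdiv |t - s| (1 / lam) hσpos hcase
      rw [div_le_div_iff₀ (hωpos _ hσpos) hω1pos] at h1
      calc |ψ t - ψ s| ≤ ε * |t - s| := hψlip t s
        _ ≤ lam * ω (1 / lam) * |t - s| := by
            rw [hεdef]
            have h0 : (0:ℝ) ≤ (1 - nu1 μ1) * (lam * ω (1 / lam) * |t - s|) :=
              mul_nonneg (sub_nonneg.mpr hν1le1) (by positivity)
            nlinarith [h0]
        _ ≤ ω |t - s| := by
            rw [mul_comm lam (ω (1/lam)), mul_assoc]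
            calc ω (1 / lam) * (lam * |t - s|) = lam * (|t - s| * ω (1 / lam)) := by ring
              _ ≤ lam * (1 / lam * ω |t - s|) := by
                  apply mul_le_mul_of_nonneg_left h1 hlam.le
              _ = ω |t - s| := by field_simp
    · calc |ψ t - ψ s| ≤ |ψ t| + |ψ s| := abs_sub _ _
        _ ≤ 3 * ε / (8 * γ * lam) + 3 * ε / (8 * γ * lam) := add_le_add (hψbd t) (hψbd s)
        _ ≤ ω (1 / lam) := by
            rw [hεdef]
            rw [← add_div, div_le_iff₀ (by positivity : (0:ℝ) < 8 * γ * lam)]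
            have h6 : 3 * nu1 μ1 ≤ γ := by nlinarith [hν1pos.le, hν1γ, hπ3]
            have h7 := mul_le_mul_of_nonneg_right h6 (mul_pos hlam hω1pos).le
            nlinarith [h7, mul_pos (mul_pos hγ hlam) hω1pos]
        _ ≤ ω |t - s| := hωmono _ _ (by positivity) hcase.le
  have hω0 : 0 ≤ ω 0 := by
    have h := hc_mod 0 ⟨le_refl 0, hT0.le⟩ 0 ⟨le_refl 0, hT0.le⟩
    simpa using h
  refine ⟨⟨?_, ?_, ?_, ?_, ?_⟩, ?_⟩
  · -- continuity
    have hψcont : Continuous ψ := by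
      rw [hψdef]; unfold phiF; fun_prop
    exact (hc_cont.sub hψcont.continuousOn).congr hcω
  · -- locally Lipschitz
    intro x hx
    obtain ⟨K, U, hU, hlip⟩ := hc_lip hx
    refine ⟨K + ε.toNNReal, U ∩ Ioo 0 T0, inter_mem hU self_mem_nhdsWithin, ?_⟩
    rw [lipschitzOnWith_iff_dist_le_mul]
    intro y hy z hz
    have hyI : y ∈ Icc 0 T0 := Ioo_subset_Icc_self hy.2
    have hzI : z ∈ Icc 0 T0 := Ioo_subset_Icc_self hz.2
    rw [lipschitzOnWith_iff_dist_le_mul] at hlip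
    have h1 := hlip y hy.1 z hz.1
    simp only [Real.dist_eq] at h1 ⊢
    rw [hcω y hyI, hcω z hzI]
    have h2 : cstar y - ψ y - (cstar z - ψ z) = (cstar y - cstar z) + (ψ z - ψ y) := by ring
    have h3 : |ψ z - ψ y| ≤ ε * |y - z| := by rw [abs_sub_comm y z]; exact hψlip z y
    have h4 : ((K + ε.toNNReal : NNReal) : ℝ) = (K : ℝ) + ε := by
      rw [NNReal.coe_add, Real.coe_toNNReal ε hεpos.le]
    rw [h2, h4]
    calc |(cstar y - cstar z) + (ψ z - ψ y)| ≤ |cstar y - cstar z| + |ψ z - ψ y| := abs_add_le _ _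
      _ ≤ (K : ℝ) * |y - z| + ε * |y - z| := add_le_add h1 h3
      _ = ((K : ℝ) + ε) * |y - z| := by ring
  · -- bounds
    intro t ht
    have htI : t ∈ Icc 0 T0 := Ioo_subset_Icc_self ht
    rw [hcω t htI]
    by_cases h : a ≤ t ∧ t ≤ b
    · have h1 : cstar t = γ ^ 2 := hc_eq t ⟨le_trans ha.le h.1, (h.2.trans hb.le)⟩
      have h2 := abs_le.mp (hψbd' t)
      have h3 := le_min_iff.mp hlam2
      rw [h1]
      constructor <;> linarith [h2.1, h2.2, h3.1, h3.2]
    · rcases not_and_or.mp h with h' | h'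
      · rw [hψ0a t (not_le.mp h').le]
        have := hc_bd t ht; constructor <;> linarith [this.1, this.2]
      · rw [hψ0b t (not_le.mp h').le]
        have := hc_bd t ht; constructor <;> linarith [this.1, this.2]
  · -- modulus of continuity
    have hmain : ∀ s t, s ∈ Icc 0 T0 → t ∈ Icc 0 T0 → s ≤ t →
        |omegaConstr cstar ε γ lam a b t - omegaConstr cstar ε γ lam a b s| ≤ ω (t - s) := by
      intro s t hs ht hst
      rcases eq_or_lt_of_le hst with rfl | hlt
      · simpa using hω0
      · rw [hcω t ht, hcω s hs]
        rcases le_or_gt t T1 with hcase | hcase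
        · have e1 : cstar t = γ ^ 2 := hc_eq t ⟨ht.1, hcase⟩
          have e2 : cstar s = γ ^ 2 := hc_eq s ⟨hs.1, hst.trans hcase⟩
          rw [e1, e2]
          have h1 : γ ^ 2 - ψ t - (γ ^ 2 - ψ s) = ψ s - ψ t := by ring
          rw [h1]
          have h2 := hK s t hlt.ne
          rwa [abs_sub_comm s t, abs_of_nonneg (sub_nonneg.mpr hst)] at h2
        · have hbt : b < t := lt_trans hb hcase
          have hψt : ψ t = 0 := hψ0b t hbt.le
          rcases le_or_gt b s with hsb | hsb
          · have h1 := hc_mod t ht s hs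
            rw [abs_of_nonneg (sub_nonneg.mpr hst)] at h1
            rw [hψt, hψ0b s hsb]
            simpa using h1
          · rw [hψt]
            have h1 : |cstar t - cstar s| ≤ (1 - η) * ω (t - s) := by
              have := hc_mod' t ht s hs
              rwa [abs_of_nonneg (sub_nonneg.mpr hst)] at this
            have h2 : |ψ s| ≤ ω (b - s) := by
              have h := hK s b hsb.ne
              rw [hψ0b b le_rfl, sub_zero, abs_sub_comm s b,
                abs_of_nonneg (sub_nonneg.mpr hsb.le)] at h
              exact h
            have h3 : ω (b - s) ≤ ω b := hωmono _ _ (by linarith [hs.1]) (by linarith [hs.1])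
            have h4 : ω (T1 - b) ≤ ω (t - s) := hωmono _ _ (by linarith) (by linarith)
            have h5 : η * ω (T1 - b) ≤ η * ω (t - s) :=
              mul_le_mul_of_nonneg_left h4 hη.1.le
            have he : cstar t - 0 - (cstar s - ψ s) = (cstar t - cstar s) + ψ s := by ring
            rw [he]
            calc |(cstar t - cstar s) + ψ s|
                ≤ |cstar t - cstar s| + |ψ s| := abs_add_le _ _
              _ ≤ (1 - η) * ω (t - s) + η * ω (t - s) := by linarith
              _ = ω (t - s) := by ring
    intro t ht s hs
    rcases le_total s t with h | h
    · rw [abs_of_nonneg (sub_nonneg.mpr h)]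
      exact hmain s t hs ht h
    · rw [abs_sub_comm t s, abs_of_nonneg (sub_nonneg.mpr h), abs_sub_comm]
      exact hmain t s ht hs h
  · -- a.e. derivative bound
    have haeA : ∀ᵐ t ∂(volume.restrict (Ioo (0:ℝ) T0)), t ≠ a := by
      refine ae_restrict_of_ae ?_
      rw [ae_iff]
      have hsub : {x : ℝ | ¬ x ≠ a} ⊆ ({a} : Set ℝ) := by
        intro x hx
        simp only [mem_setOf_eq, not_not] at hx
        simp [hx]
      exact measure_mono_null hsub Real.volume_singleton
    have haeB : ∀ᵐ t ∂(volume.restrict (Ioo (0:ℝ) T0)), t ≠ b := by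
      refine ae_restrict_of_ae ?_
      rw [ae_iff]
      have hsub : {x : ℝ | ¬ x ≠ b} ⊆ ({b} : Set ℝ) := by
        intro x hx
        simp only [mem_setOf_eq, not_not] at hx
        simp [hx]
      exact measure_mono_null hsub Real.volume_singleton
    filter_upwards [hc_ae, ae_restrict_mem measurableSet_Ioo, haeA, haeB]
      with t h1 h2 hta htb
    rcases lt_trichotomy t a with hlt | heq | hgt
    · have hev : (omegaConstr cstar ε γ lam a b) =ᶠ[nhds t] cstar := by
        filter_upwards [Iio_mem_nhds hlt] with x hx
        simp only [omegaConstr]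
        rw [if_neg (fun h => absurd h.1 (not_le.mpr hx))]
      rw [hev.deriv_eq]
      exact h1
    · exact absurd heq hta
    · rcases lt_trichotomy t b with hlt' | heq' | hgt'
      · have hev : (omegaConstr cstar ε γ lam a b) =ᶠ[nhds t]
            (fun x => γ ^ 2 - phiF ε γ lam x) := by
          filter_upwards [Ioo_mem_nhds hgt hlt'] with x hx
          simp only [omegaConstr]
          rw [if_pos ⟨hx.1.le, hx.2.le⟩]
        rw [hev.deriv_eq]
        have hd : HasDerivAt (fun x => γ ^ 2 - phiF ε γ lam x)
            (0 - (ε / 2 * Real.cos (2 * γ * lam * t) +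
              ε ^ 2 / (16 * γ ^ 3 * lam) * (Real.sin (γ * lam * t)) ^ 3 *
                Real.cos (γ * lam * t))) t :=
          (hasDerivAt_const t (γ ^ 2)).sub (phi_hasDerivAt ε γ lam t hγ.ne' hlam.ne')
        rw [hd.deriv]
        have hbmem : b ∈ Ioo (0:ℝ) T0 := ⟨lt_trans ha hab, lt_trans hb hT1.2⟩
        calc |0 - (ε / 2 * Real.cos (2 * γ * lam * t) +
              ε ^ 2 / (16 * γ ^ 3 * lam) * (Real.sin (γ * lam * t)) ^ 3 *
                Real.cos (γ * lam * t))|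
            = |ε / 2 * Real.cos (2 * γ * lam * t) +
              ε ^ 2 / (16 * γ ^ 3 * lam) * (Real.sin (γ * lam * t)) ^ 3 *
                Real.cos (γ * lam * t)| := by rw [zero_sub, abs_neg]
          _ ≤ ε := phi_deriv_bound ε γ lam t hγ hlam hεpos.le hε8
          _ ≤ θ b := hθb
          _ ≤ θ t := hθmono h2 hbmem hlt'.le
      · exact absurd heq' htb
      · have hev : (omegaConstr cstar ε γ lam a b) =ᶠ[nhds t] cstar := by
          filter_upwards [Ioi_mem_nhds hgt'] with x hx
          simp only [omegaConstr]
          rw [if_neg (fun h => absurd h.2 (not_le.mpr hx))]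
        rw [hev.deriv_eq]
        exact h1
  · -- closeness
    intro t ht
    rw [hcω t ht]
    have h := hψbd' t
    have h1 : cstar t - ψ t - cstar t = -ψ t := by ring
    rw [h1, abs_neg]
    exact h
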